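/- Let a(τ) = ((√2 + 1)τ + 2)/(4τ(τ + 1)) and b(τ) = ((√2 − 1)τ − 2)/(4τ(τ + 1)), fix τ₀ > 2(√2 + 1), and let ψ : [τ₀, ∞) → ℝ be a differentiable solution of the Riccati equation dψ/dτ = b(τ) − a(τ)·ψ² with 0 ≤ ψ(τ) ≤ √2 − 1 for all τ ≥ τ₀. Then ψ(τ) tends to √2 − 1 as τ → ∞. -/

import Mathlib

open Filter

noncomputable def aR (τ : ℝ) : ℝ := ((Real.sqrt 2 + 1) * τ + 2) / (4 * τ * (τ + 1))
noncomputable def bR (τ : ℝ) : ℝ := ((Real.sqrt 2 - 1) * τ - 2) / (4 * τ * (τ + 1))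

lemma riccati_key_poly (s τ p : ℝ) (hs2 : s ^ 2 = 2) (hs1 : 1 ≤ s) (hτ : 4 ≤ τ)
    (h0 : 0 ≤ p) (h1 : p ≤ s - 1) :
    0 ≤ 5*τ*((s-1)*τ-2) - 5*τ*((s+1)*τ+2)*p^2 - 2*τ*(τ+1)*(s-1-p) + 20*(τ+1) := by
  have h1' : (0:ℝ) ≤ s - 1 - p := by linarith
  have hst : (0:ℝ) ≤ (s+1)*τ := mul_nonneg (by linarith) (by linarith)
  have c1 : (0:ℝ) ≤ 5*τ*((s+1)*τ+2)*(p*(s-1-p)) := by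
    apply mul_nonneg _ (mul_nonneg h0 h1')
    apply mul_nonneg (by linarith) (by linarith)
  have c2 : (0:ℝ) ≤ (3*τ-12+10*s)*τ*(s-1-p) :=
    mul_nonneg (mul_nonneg (by linarith) (by linarith)) h1'
  have c3 : (0:ℝ) ≤ 20*τ*(s-1) := mul_nonneg (by linarith) (by linarith)
  have hz : s^2 - 2 = 0 := by rw [hs2]; ring
  have hEq : 5*τ*((s-1)*τ-2) - 5*τ*((s+1)*τ+2)*p^2 - 2*τ*(τ+1)*(s-1-p) + 20*(τ+1)
      = 5*τ*((s+1)*τ+2)*(p*(s-1-p)) + (3*τ-12+10*s)*τ*(s-1-p) + 20*τ*(s-1) + 20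
        + (-5*τ^2*p - 10*τ)*(s^2-2) := by ring
  rw [hEq, hz, mul_zero, add_zero]
  linarith

lemma riccati_key (s τ p : ℝ) (hs2 : s ^ 2 = 2) (hs1 : 1 ≤ s) (hτ : 4 ≤ τ)
    (h0 : 0 ≤ p) (h1 : p ≤ s - 1) :
    (s - 1 - p) / (10 * τ) - 1 / τ ^ 2 ≤
      ((s - 1) * τ - 2) / (4 * τ * (τ + 1)) - ((s + 1) * τ + 2) / (4 * τ * (τ + 1)) * p ^ 2 := by
  have hτ0 : (0:ℝ) < τ := by linarith
  have hτ1 : (0:ℝ) < τ + 1 := by linarith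
  have hP := riccati_key_poly s τ p hs2 hs1 hτ h0 h1
  rw [← sub_nonneg]
  have hEq : ((s - 1) * τ - 2) / (4 * τ * (τ + 1)) - ((s + 1) * τ + 2) / (4 * τ * (τ + 1)) * p ^ 2
      - ((s - 1 - p) / (10 * τ) - 1 / τ ^ 2)
      = (5*τ*((s-1)*τ-2) - 5*τ*((s+1)*τ+2)*p^2 - 2*τ*(τ+1)*(s-1-p) + 20*(τ+1))
        / (20 * τ ^ 2 * (τ + 1)) := by
    field_simp
    ring
  rw [hEq]
  positivity

/-- A solution of the Riccati equation `ψ' = b(τ) − a(τ)ψ²` staying in the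
strip `0 ≤ ψ ≤ √2 − 1` on `[τ₀, ∞)` (with `τ₀ > 2(√2+1)`) tends to
`√2 − 1` at infinity. -/
theorem riccati_solution_in_D₁_tends_to_limit
    (τ₀ : ℝ) (hτ₀ : 2 * (Real.sqrt 2 + 1) < τ₀) (ψ : ℝ → ℝ)
    (hψ : ∀ τ : ℝ, τ₀ ≤ τ →
      HasDerivWithinAt ψ (bR τ - aR τ * ψ τ ^ 2) (Set.Ici τ₀) τ)
    (hbounds : ∀ τ : ℝ, τ₀ ≤ τ → 0 ≤ ψ τ ∧ ψ τ ≤ Real.sqrt 2 - 1) :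
    Tendsto ψ atTop (nhds (Real.sqrt 2 - 1)) := by
  have hs1 : (1:ℝ) ≤ Real.sqrt 2 := by
    nlinarith [Real.sq_sqrt (by norm_num : (2:ℝ) ≥ 0), Real.sqrt_nonneg 2]
  have hs2 : Real.sqrt 2 ^ 2 = 2 := Real.sq_sqrt (by norm_num)
  have h4τ₀ : (4:ℝ) < τ₀ := by nlinarith
  set L : ℝ := Real.sqrt 2 - 1 with hL
  set w : ℝ → ℝ := fun τ => L - ψ τ with hw
  set V : ℝ → ℝ := fun τ => τ ^ (1/10 : ℝ) * w τ + (10/9) * τ ^ (-(9/10) : ℝ) with hVdef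
  set V' : ℝ → ℝ := fun τ =>
    ((1/10) * τ ^ ((1/10 : ℝ) - 1) * w τ + τ ^ (1/10 : ℝ) * (-(bR τ - aR τ * ψ τ ^ 2)))
      + (10/9) * (-(9/10) * τ ^ ((-(9/10) : ℝ) - 1)) with hV'def
  -- V has derivative V' within Ioi τ₀ at every point of Ioi τ₀
  have hVderiv : ∀ τ ∈ Set.Ioi τ₀, HasDerivWithinAt V (V' τ) (Set.Ioi τ₀) τ := by
    intro τ hτ
    have hτpos : (0:ℝ) < τ := by have := hτ.out; linarith
    have hf : HasDerivAt (fun x : ℝ => x ^ (1/10 : ℝ)) ((1/10) * τ ^ ((1/10 : ℝ) - 1)) τ :=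
      Real.hasDerivAt_rpow_const (Or.inl hτpos.ne')
    have hg : HasDerivAt (fun x : ℝ => x ^ (-(9/10) : ℝ)) ((-(9/10)) * τ ^ ((-(9/10) : ℝ) - 1)) τ :=
      Real.hasDerivAt_rpow_const (Or.inl hτpos.ne')
    have hwd : HasDerivWithinAt w (-(bR τ - aR τ * ψ τ ^ 2)) (Set.Ioi τ₀) τ := by
      have := ((hasDerivWithinAt_const τ (Set.Ici τ₀) L).sub (hψ τ (le_of_lt hτ)))
      have h2 := this.mono (Set.Ioi_subset_Ici_self)
      rw [zero_sub] at h2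
      exact h2
    exact ((hf.hasDerivWithinAt.mul hwd).add
      ((hg.hasDerivWithinAt.const_mul (10/9 : ℝ))))
  -- V' ≤ 0 on Ioi τ₀
  have hV'nonpos : ∀ τ ∈ Set.Ioi τ₀, V' τ ≤ 0 := by
    intro τ hτ
    have hττ₀ : τ₀ < τ := hτ
    have hτpos : (0:ℝ) < τ := by linarith
    obtain ⟨hb0, hb1⟩ := hbounds τ (le_of_lt hττ₀)
    have hwnn : 0 ≤ w τ := by simp only [hw]; linarith [hb1]
    have hkey := riccati_key (Real.sqrt 2) τ (ψ τ) hs2 hs1 (by linarith) hb0 hb1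
    -- rewrite bR, aR
    have hba : (Real.sqrt 2 - 1 - ψ τ) / (10 * τ) - 1 / τ ^ 2 ≤ bR τ - aR τ * ψ τ ^ 2 := by
      simpa [bR, aR] using hkey
    have hwτ : w τ / (10 * τ) - 1 / τ ^ 2 ≤ bR τ - aR τ * ψ τ ^ 2 := by
      simpa [hw, hL] using hba
    -- rpow identities
    have e1 : τ ^ (1/10 : ℝ) * (w τ / (10 * τ)) = (1/10) * τ ^ ((1/10 : ℝ) - 1) * w τ := by
      rw [eq_comm, mul_comm]
      rw [Real.rpow_sub hτpos, Real.rpow_one]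
      field_simp
    have e2' : τ ^ ((-2:ℝ)) = 1 / τ ^ 2 := by
      rw [show ((-2:ℝ)) = ((-2:ℤ):ℝ) by norm_num, Real.rpow_intCast]
      field_simp
    have e2 : τ ^ (1/10 : ℝ) * (1 / τ ^ 2) = τ ^ ((-(19/10)) : ℝ) := by
      rw [show ((-(19/10)):ℝ) = (1/10:ℝ) + (-2:ℝ) by norm_num, Real.rpow_add hτpos, e2']
    have e3 : (10/9 : ℝ) * (-(9/10) * τ ^ ((-(9/10) : ℝ) - 1)) = -(τ ^ ((-(19/10)) : ℝ)) := by
      have : ((-(9/10) : ℝ) - 1) = (-(19/10) : ℝ) := by norm_num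
      rw [this]; ring
    have hfpos : 0 ≤ τ ^ (1/10 : ℝ) := Real.rpow_nonneg hτpos.le _
    have hmul : τ ^ (1/10 : ℝ) * (-(bR τ - aR τ * ψ τ ^ 2))
        ≤ τ ^ (1/10 : ℝ) * (-(w τ / (10 * τ) - 1 / τ ^ 2)) := by
      apply mul_le_mul_of_nonneg_left _ hfpos
      linarith
    have : τ ^ (1/10 : ℝ) * (-(w τ / (10 * τ) - 1 / τ ^ 2))
        = -((1/10) * τ ^ ((1/10 : ℝ) - 1) * w τ) + τ ^ ((-(19/10)) : ℝ) := by
      rw [mul_comm, ← neg_mul, neg_sub, sub_mul, mul_comm (1 / τ ^ 2), mul_comm (w τ / (10 * τ))]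
      rw [e1, e2]; ring
    have hmul' : τ ^ (1/10 : ℝ) * (-(bR τ - aR τ * ψ τ ^ 2))
        ≤ -((1/10) * τ ^ ((1/10 : ℝ) - 1) * w τ) + τ ^ ((-(19/10)) : ℝ) :=
      le_trans hmul this.le
    show ((1/10) * τ ^ ((1/10 : ℝ) - 1) * w τ + τ ^ (1/10 : ℝ) * (-(bR τ - aR τ * ψ τ ^ 2)))
      + (10/9) * (-(9/10) * τ ^ ((-(9/10) : ℝ) - 1)) ≤ 0
    rw [e3]
    linarith
  -- V is antitone on Ici τ₀
  have hVcont : ContinuousOn V (Set.Ici τ₀) := by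
    have hψc : ContinuousOn ψ (Set.Ici τ₀) := fun x hx => (hψ x hx).continuousWithinAt
    have h1 : ContinuousOn (fun τ : ℝ => τ ^ (1/10 : ℝ)) (Set.Ici τ₀) := by
      intro x hx
      have hx' : τ₀ ≤ x := hx
      exact (Real.continuousAt_rpow_const x _ (Or.inl (by intro h; rw [h] at hx'; linarith))).continuousWithinAt
    have h2 : ContinuousOn (fun τ : ℝ => τ ^ (-(9/10) : ℝ)) (Set.Ici τ₀) := by
      intro x hx
      have hx' : τ₀ ≤ x := hx
      exact (Real.continuousAt_rpow_const x _ (Or.inl (by intro h; rw [h] at hx'; linarith))).continuousWithinAt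
    exact (h1.mul (continuousOn_const.sub hψc)).add (continuousOn_const.mul h2)
  have hVanti : AntitoneOn V (Set.Ici τ₀) := by
    apply antitoneOn_of_hasDerivWithinAt_nonpos (convex_Ici τ₀) hVcont
    · intro x hx
      rw [interior_Ici] at hx ⊢
      exact hVderiv x hx
    · intro x hx
      rw [interior_Ici] at hx
      exact hV'nonpos x hx
  -- bound: w τ ≤ V τ₀ * τ ^ (-(1/10))
  have hbound : ∀ τ : ℝ, τ₀ ≤ τ → w τ ≤ V τ₀ * τ ^ (-(1/10) : ℝ) := by
    intro τ hτ
    have hτpos : (0:ℝ) < τ := by linarith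
    have hVle : V τ ≤ V τ₀ := hVanti (Set.self_mem_Ici) hτ hτ
    have hg : 0 < τ ^ (-(9/10) : ℝ) := Real.rpow_pos_of_pos hτpos _
    have h1 : τ ^ (1/10 : ℝ) * w τ ≤ V τ₀ := by
      have h1a : τ ^ (1/10 : ℝ) * w τ ≤ V τ :=
        le_add_of_nonneg_right (by positivity)
      exact h1a.trans hVle
    have hpos : 0 < τ ^ ((1/10) : ℝ) := Real.rpow_pos_of_pos hτpos _
    have hinv : τ ^ (-(1/10) : ℝ) * τ ^ ((1/10) : ℝ) = 1 := by
      rw [← Real.rpow_add hτpos]; norm_num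
    calc w τ = (τ ^ (-(1/10) : ℝ) * τ ^ ((1/10) : ℝ)) * w τ := by rw [hinv, one_mul]
      _ = τ ^ (-(1/10) : ℝ) * (τ ^ ((1/10) : ℝ) * w τ) := by ring
      _ ≤ τ ^ (-(1/10) : ℝ) * V τ₀ := by
          exact mul_le_mul_of_nonneg_left h1 (Real.rpow_nonneg hτpos.le _)
      _ = V τ₀ * τ ^ (-(1/10) : ℝ) := by ring
  -- squeeze
  have hwlim : Tendsto w atTop (nhds 0) := by
    have hub : Tendsto (fun τ : ℝ => V τ₀ * τ ^ (-(1/10) : ℝ)) atTop (nhds 0) := by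
      have := (tendsto_rpow_neg_atTop (by norm_num : (0:ℝ) < 1/10)).const_mul (V τ₀)
      simpa using this
    have hlb : Tendsto (fun _ : ℝ => (0:ℝ)) atTop (nhds 0) := tendsto_const_nhds
    apply tendsto_of_tendsto_of_tendsto_of_le_of_le' hlb hub
    · filter_upwards [eventually_ge_atTop τ₀] with τ hτ
      have := (hbounds τ hτ).2
      simp only [hw]; linarith
    · filter_upwards [eventually_ge_atTop τ₀] with τ hτ
      exact hbound τ hτ
  have : Tendsto (fun τ => L - w τ) atTop (nhds (L - 0)) := tendsto_const_nhds.sub hwlim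
  simpa [hw] using this
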